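/- arXiv:2308.03911 — 5 statements merged into one kernel-verified Lean document; each statement's English description precedes it below -/
import Mathlib

section
/- Let f be analytic and locally injective on the unit disk D with f'(z) ≠ 0 for all z ∈ D, and suppose Re{1 + z f''(z)/f'(z)} ≥ 0 on D (f convex). Define φ(z) = f''(z)/(2f'(z) + z f''(z)). Then |φ(z)| ≤ 1 for all z ∈ D; equivalently the pole p(ζ) = ζ + 2f'(ζ)/f''(ζ) of each BMA satisfies |p(ζ)| ≥ 1 wherever f''(ζ) ≠ 0. -/
open Complex Metric Filter Topology

/-- Key Schwarz-lemma estimate: if `h` is analytic on the unit ball with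
`h 0 = 1`, `Re h ≥ 0`, and `h z - 1 = z * a z`, then `‖a z‖ ≤ ‖h z + 1‖`. -/
lemma key_schwarz_bound (h a : ℂ → ℂ)
    (hh : ∀ z ∈ ball (0 : ℂ) 1, AnalyticAt ℂ (h) z)
    (hre : ∀ z ∈ ball (0 : ℂ) 1, 0 ≤ (h z).re)
    (h0 : h 0 = 1)
    (hfac : ∀ z ∈ ball (0 : ℂ) 1, h z - 1 = z * a z)
    (hacont : ContinuousAt a 0) :
    ∀ z ∈ ball (0 : ℂ) 1, ‖a z‖ ≤ ‖h z + 1‖ := by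
  -- step 1 : for every t > 0 Schwarz's lemma applied to (h-1)/(h+1+2t)
  have step1 : ∀ t : ℝ, 0 < t → ∀ z ∈ ball (0 : ℂ) 1,
      ‖h z - 1‖ ≤ ‖z‖ * ‖h z + 1 + 2 * t‖ := by
    intro t ht z hz
    set g : ℂ → ℂ := fun w => (h w - 1) / (h w + 1 + 2 * t) with hg
    have hden : ∀ w ∈ ball (0 : ℂ) 1, h w + 1 + 2 * (t : ℂ) ≠ 0 := by
      intro w hw
      intro hcon
      have : (h w + 1 + 2 * (t : ℝ)).re = (h w).re + 1 + 2 * t := by simp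
      rw [hcon] at this
      simp at this
      nlinarith [hre w hw]
    have hlt : ∀ w ∈ ball (0 : ℂ) 1, ‖h w - 1‖ < ‖h w + 1 + 2 * t‖ := by
      intro w hw
      have hre' := hre w hw
      have h1 : Complex.normSq (h w - 1) < Complex.normSq (h w + 1 + 2 * t) := by
        simp only [Complex.normSq_apply, Complex.sub_re, Complex.add_re, Complex.sub_im,
          Complex.add_im, Complex.one_re, Complex.one_im, Complex.mul_re, Complex.mul_im,
          Complex.ofReal_re, Complex.ofReal_im, Complex.re_ofNat, Complex.im_ofNat]
        nlinarith
      have := Real.sqrt_lt_sqrt (Complex.normSq_nonneg _) h1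
      simpa [Complex.norm_def] using this
    have hdiff : DifferentiableOn ℂ g (ball (0 : ℂ) 1) := by
      intro w hw
      exact (((hh w hw).sub analyticAt_const).div
        (((hh w hw).add analyticAt_const).add analyticAt_const)
        (hden w hw)).differentiableAt.differentiableWithinAt
    have hmaps : Set.MapsTo g (ball (0 : ℂ) 1) (ball (0 : ℂ) 1) := by
      intro w hw
      rw [mem_ball_zero_iff]
      have := hlt w hw
      have hd0 : ‖h w + 1 + 2 * (t : ℂ)‖ ≠ 0 := norm_ne_zero_iff.mpr (hden w hw)
      rw [hg]
      simp only [norm_div]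
      rw [div_lt_one (lt_of_le_of_ne (norm_nonneg _) (Ne.symm hd0))]
      exact this
    have hg0 : g 0 = 0 := by simp [hg, h0]
    have := Complex.norm_le_norm_of_mapsTo_ball hdiff (hmaps.mono_right ball_subset_closedBall) hg0
      (by simpa using mem_ball_zero_iff.mp hz)
    have habs : ‖g z‖ = ‖h z - 1‖ / ‖h z + 1 + 2 * t‖ := by
      simp [hg, map_div₀]
    rw [habs] at this
    have hdpos : 0 < ‖h z + 1 + 2 * (t : ℂ)‖ :=
      lt_of_le_of_ne (norm_nonneg _) (Ne.symm (norm_ne_zero_iff.mpr (hden z hz)))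
    rw [div_le_iff₀ hdpos] at this
    simpa using this
  -- step 2 : the bound at nonzero points
  have step2 : ∀ z ∈ ball (0 : ℂ) 1, z ≠ 0 → ‖a z‖ ≤ ‖h z + 1‖ := by
    intro z hz hz0
    have hzpos : 0 < ‖z‖ := norm_pos_iff.mpr hz0
    refine le_of_forall_pos_le_add ?_
    intro ε hε
    have hteq := step1 (ε / 2) (by linarith) z hz
    rw [hfac z hz, norm_mul] at hteq
    have htri : ‖h z + 1 + 2 * ((ε / 2 : ℝ) : ℂ)‖ ≤ ‖h z + 1‖ + ε := by
      calc ‖h z + 1 + 2 * ((ε / 2 : ℝ) : ℂ)‖ ≤ ‖h z + 1‖ + ‖2 * ((ε / 2 : ℝ) : ℂ)‖ :=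
            norm_add_le _ _
        _ = ‖h z + 1‖ + ε := by
            rw [norm_mul]
            simp [abs_of_pos hε]
            ring
    have : ‖z‖ * ‖a z‖ ≤ ‖z‖ * (‖h z + 1‖ + ε) :=
      le_trans hteq (mul_le_mul_of_nonneg_left htri (norm_nonneg _))
    exact le_of_mul_le_mul_left this hzpos
  -- step 3 : extend to `z = 0` by continuity
  intro z hz
  rcases eq_or_ne z 0 with rfl | hz0
  · have hcont : ContinuousAt (fun w => ‖a w‖ - ‖h w + 1‖) 0 := by
      have hhc : ContinuousAt h 0 := (hh 0 (by simp)).continuousAt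
      exact (hacont.norm).sub ((hhc.add continuousAt_const).norm)
    have hne : (𝓝[≠] (0 : ℂ)).NeBot := by infer_instance
    have hev : ∀ᶠ w in 𝓝[≠] (0 : ℂ), ‖a w‖ - ‖h w + 1‖ ≤ 0 := by
      have hball : ∀ᶠ w in 𝓝[≠] (0 : ℂ), w ∈ ball (0 : ℂ) 1 :=
        Filter.eventually_inf_principal.mpr
          (Filter.eventually_of_mem (ball_mem_nhds 0 one_pos) fun w hw _ => hw)
      have hmem : ∀ᶠ w in 𝓝[≠] (0 : ℂ), w ≠ 0 :=
        eventually_mem_nhdsWithin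
      filter_upwards [hball, hmem] with w hw hw0
      linarith [step2 w hw hw0]
    have htend : Filter.Tendsto (fun w => ‖a w‖ - ‖h w + 1‖) (𝓝[≠] (0 : ℂ))
        (𝓝 (‖a 0‖ - ‖h 0 + 1‖)) :=
      (hcont.tendsto).mono_left nhdsWithin_le_nhds
    have := le_of_tendsto htend hev
    linarith
  · exact step2 z hz hz0

/-- If `f` is convex on the unit disk then `|φ| ≤ 1`, i.e. all BMA poles lie
outside the open unit disk. -/
theorem convex_implies_poles_outside (f : ℂ → ℂ)
    (hf : ∀ z ∈ ball (0 : ℂ) 1, AnalyticAt ℂ f z)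
    (hf' : ∀ z ∈ ball (0 : ℂ) 1, deriv f z ≠ 0)
    (hconv : ∀ z ∈ ball (0 : ℂ) 1,
      0 ≤ (1 + z * (deriv (deriv f) z / deriv f z)).re) :
    (∀ z ∈ ball (0 : ℂ) 1,
        2 * deriv f z + z * deriv (deriv f) z ≠ 0 ∧
        ‖deriv (deriv f) z / (2 * deriv f z + z * deriv (deriv f) z)‖ ≤ 1) ∧
      ∀ ζ ∈ ball (0 : ℂ) 1, deriv (deriv f) ζ ≠ 0 →
        1 ≤ ‖ζ + 2 * deriv f ζ / deriv (deriv f) ζ‖ := by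
  have hfa : AnalyticOnNhd ℂ f (ball (0 : ℂ) 1) := hf
  have hf1 : AnalyticOnNhd ℂ (deriv f) (ball (0 : ℂ) 1) := hfa.deriv
  have hf2 : AnalyticOnNhd ℂ (deriv (deriv f)) (ball (0 : ℂ) 1) := hf1.deriv
  set a : ℂ → ℂ := fun z => deriv (deriv f) z / deriv f z with ha
  set h : ℂ → ℂ := fun z => 1 + z * a z with hhdef
  have key : ∀ z ∈ ball (0 : ℂ) 1, ‖a z‖ ≤ ‖h z + 1‖ := by
    apply key_schwarz_bound
    · intro z hz
      exact analyticAt_const.add ((analyticAt_id).mul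
        ((hf2 z hz).div (hf1 z hz) (hf' z hz)))
    · intro z hz; simpa [hhdef, ha] using hconv z hz
    · simp [hhdef]
    · intro z hz; simp only [hhdef]; ring
    · exact (hf2 0 (by simp)).continuousAt.div (hf1 0 (by simp)).continuousAt
        (hf' 0 (by simp))
  have hne1 : ∀ z ∈ ball (0 : ℂ) 1, h z + 1 ≠ 0 := by
    intro z hz hcon
    have hrez : 0 ≤ (h z).re := by simpa [hhdef, ha] using hconv z hz
    have h1 := congrArg Complex.re hcon
    simp [Complex.add_re] at h1
    linarith
  have hfac : ∀ z ∈ ball (0 : ℂ) 1,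
      2 * deriv f z + z * deriv (deriv f) z = deriv f z * (h z + 1) := by
    intro z hz
    have hfne := hf' z hz
    simp only [hhdef, ha]
    field_simp
    ring
  constructor
  · intro z hz
    have hD : 2 * deriv f z + z * deriv (deriv f) z = deriv f z * (h z + 1) := hfac z hz
    have hDne : 2 * deriv f z + z * deriv (deriv f) z ≠ 0 := by
      rw [hD]; exact mul_ne_zero (hf' z hz) (hne1 z hz)
    refine ⟨hDne, ?_⟩
    rw [hD]
    have hq : deriv (deriv f) z / (deriv f z * (h z + 1)) = a z / (h z + 1) := by
      rw [ha]; rw [← div_div]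
    rw [hq, norm_div, div_le_one (norm_pos_iff.mpr (hne1 z hz))]
    exact key z hz
  · intro ζ hζ hf2ne
    have hD : 2 * deriv f ζ + ζ * deriv (deriv f) ζ = deriv f ζ * (h ζ + 1) := hfac ζ hζ
    have hp : ζ + 2 * deriv f ζ / deriv (deriv f) ζ
        = deriv f ζ * (h ζ + 1) / deriv (deriv f) ζ := by
      rw [← hD]; field_simp; ring
    rw [hp, norm_div, le_div_iff₀ (norm_pos_iff.mpr hf2ne), one_mul, norm_mul]
    have hanorm : ‖a ζ‖ = ‖deriv (deriv f) ζ‖ / ‖deriv f ζ‖ := by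
      rw [ha]; simp [norm_div]
    have hkey := key ζ hζ
    rw [hanorm, div_le_iff₀ (norm_pos_iff.mpr (hf' ζ hζ))] at hkey
    linarith [hkey]
end

section
/- Let f be analytic on the unit disk D with f' never zero, and suppose that for every ζ ∈ D with f''(ζ) ≠ 0 the pole p(ζ) = ζ + 2f'(ζ)/f''(ζ) satisfies |p(ζ)| ≥ 1. Then Re{1 + z f''(z)/f'(z)} ≥ 0 for all z ∈ D, i.e., f is convex. -/
open Complex Metric

/-- If every BMA pole of `f` lies outside the open unit disk then `f` is convex. -/
theorem poles_outside_implies_convex (f : ℂ → ℂ)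
    (hf : ∀ z ∈ ball (0 : ℂ) 1, AnalyticAt ℂ f z)
    (hf' : ∀ z ∈ ball (0 : ℂ) 1, deriv f z ≠ 0)
    (hpole : ∀ ζ ∈ ball (0 : ℂ) 1, deriv (deriv f) ζ ≠ 0 →
      1 ≤ ‖ζ + 2 * deriv f ζ / deriv (deriv f) ζ‖) :
    ∀ z ∈ ball (0 : ℂ) 1,
      0 ≤ (1 + z * (deriv (deriv f) z / deriv f z)).re := by
  intro z hz
  have ha := hf' z hz
  by_cases hb : deriv (deriv f) z = 0
  · simp [hb]
  by_cases hz0 : z = 0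
  · simp [hz0]
  set a := deriv f z with ha'
  set b := deriv (deriv f) z with hb'
  have hp := hpole z hz hb
  by_contra hneg
  push_neg at hneg
  set w : ℂ := z * (b / a) with hw
  have hw0 : w ≠ 0 := by
    simp only [hw, mul_ne_zero_iff, div_ne_zero_iff]
    exact ⟨hz0, hb, ha⟩
  have hrew : z + 2 * a / b = z * (w + 2) / w := by
    rw [hw]
    field_simp
  have hzlt : ‖z‖ < 1 := by simpa using hz
  have hRe : w.re < -1 := by
    simp only [Complex.add_re, Complex.one_re] at hneg
    linarith
  have h1 : ‖w + 2‖ < ‖w‖ := by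
    have hsq : ‖w + 2‖ ^ 2 < ‖w‖ ^ 2 := by
      rw [Complex.sq_norm, Complex.sq_norm,
        Complex.normSq_apply, Complex.normSq_apply]
      simp only [Complex.add_re, Complex.add_im]
      norm_num
      nlinarith
    have h0 : (0:ℝ) ≤ ‖w‖ := norm_nonneg _
    nlinarith [norm_nonneg (w + 2)]
  have hlt : ‖z * (w + 2) / w‖ < 1 := by
    rw [norm_div, norm_mul, div_lt_one (norm_pos_iff.mpr hw0)]
    calc ‖z‖ * ‖w + 2‖ ≤ 1 * ‖w + 2‖ := by
          apply mul_le_mul_of_nonneg_right hzlt.le (norm_nonneg _)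
      _ = ‖w + 2‖ := one_mul _
      _ < ‖w‖ := h1
  rw [hrew] at hp
  linarith
end

section
/- Let f be analytic on the unit disk D with f' never zero and Re{1 + z f''(z)/f'(z)} ≥ 0 on D. If there exists ζ₀ ∈ D with f''(ζ₀) ≠ 0 and |ζ₀ + 2f'(ζ₀)/f''(ζ₀)| = 1, then the function φ(z) = f''(z)/(2f'(z) + z f''(z)) is a constant of modulus 1 on D. -/
open Complex Metric

/-- If `f` is convex on the unit disk and the pole of a single BMA lies on the
unit circle, then `φ = f''/(2f' + z f'')` is a unimodular constant. -/
theorem pole_on_boundary_implies_halfplane (f : ℂ → ℂ)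
    (hf : ∀ z ∈ ball (0 : ℂ) 1, AnalyticAt ℂ f z)
    (hf' : ∀ z ∈ ball (0 : ℂ) 1, deriv f z ≠ 0)
    (hconv : ∀ z ∈ ball (0 : ℂ) 1,
      0 ≤ (1 + z * (deriv (deriv f) z / deriv f z)).re)
    (ζ₀ : ℂ) (hζ₀ : ζ₀ ∈ ball (0 : ℂ) 1) (hf''ζ₀ : deriv (deriv f) ζ₀ ≠ 0)
    (hone : ‖ζ₀ + 2 * deriv f ζ₀ / deriv (deriv f) ζ₀‖ = 1) :
    ∃ c : ℂ, ‖c‖ = 1 ∧ ∀ z ∈ ball (0 : ℂ) 1,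
      deriv (deriv f) z / (2 * deriv f z + z * deriv (deriv f) z) = c := by
  set D : Set ℂ := ball (0 : ℂ) 1 with hD
  set φ : ℂ → ℂ := fun z =>
    deriv (deriv f) z / (2 * deriv f z + z * deriv (deriv f) z) with hφdef
  -- the denominator never vanishes on D
  have hden : ∀ z ∈ D, 2 * deriv f z + z * deriv (deriv f) z ≠ 0 := by
    intro z hz
    have hfz := hf' z hz
    have h1 : 2 * deriv f z + z * deriv (deriv f) z
        = deriv f z * (1 + (1 + z * (deriv (deriv f) z / deriv f z))) := by
      field_simp; ring
    rw [h1]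
    refine mul_ne_zero hfz ?_
    intro h0
    have hre := hconv z hz
    have := congrArg Complex.re h0
    simp only [Complex.add_re, Complex.one_re, Complex.zero_re] at this hre
    linarith
  -- φ is analytic on D
  have hfa : AnalyticOnNhd ℂ f D := fun z hz => hf z hz
  have hfa1 : AnalyticOnNhd ℂ (deriv f) D := hfa.deriv
  have hfa2 : AnalyticOnNhd ℂ (deriv (deriv f)) D := hfa1.deriv
  have hφa : ∀ z ∈ D, AnalyticAt ℂ φ z := by
    intro z hz
    exact (hfa2 z hz).div ((analyticAt_const.mul (hfa1 z hz)).add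
      (analyticAt_id.mul (hfa2 z hz))) (hden z hz)
  have hφd : DifferentiableOn ℂ φ D := fun z hz =>
    (hφa z hz).differentiableAt.differentiableWithinAt
  -- g z = z * φ z
  set g : ℂ → ℂ := fun z => z * φ z with hgdef
  have hgd : DifferentiableOn ℂ g D :=
    (differentiable_id.differentiableOn).mul hφd
  have hg0 : g 0 = 0 := by simp [hgdef]
  -- ‖g z‖ ≤ 1 on D
  have hgle : ∀ z ∈ D, ‖g z‖ ≤ 1 := by
    intro z hz
    have hfz := hf' z hz
    set p : ℂ := 1 + z * (deriv (deriv f) z / deriv f z) with hp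
    have hrep : 0 ≤ p.re := hconv z hz
    have hnum : z * deriv (deriv f) z = deriv f z * (p - 1) := by
      rw [hp]; field_simp; ring
    have hdenom : 2 * deriv f z + z * deriv (deriv f) z = deriv f z * (p + 1) := by
      rw [hp]; field_simp; ring
    have hgz : g z = (p - 1) / (p + 1) := by
      simp only [hgdef, hφdef]
      rw [mul_div_assoc', hdenom, hnum, mul_div_mul_left _ _ hfz]
    rw [hgz, norm_div]
    have hp1 : (p + 1) ≠ 0 := by
      intro h0
      have := congrArg Complex.re h0
      simp only [Complex.add_re, Complex.one_re, Complex.zero_re] at this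
      linarith
    rw [div_le_one (norm_pos_iff.mpr hp1)]
    have hsq : Complex.normSq (p - 1) ≤ Complex.normSq (p + 1) := by
      simp only [Complex.normSq_apply, Complex.sub_re, Complex.sub_im, Complex.add_re,
        Complex.add_im, Complex.one_re, Complex.one_im]
      nlinarith
    have := Real.sqrt_le_sqrt hsq
    simpa [Complex.norm_def] using this
  -- in fact ‖g z‖ < 1 on D (else g is a unimodular constant, contradicting g 0 = 0)
  have hglt : ∀ z ∈ D, ‖g z‖ < 1 := by
    intro z hz
    rcases lt_or_eq_of_le (hgle z hz) with h | h
    · exact h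
    · exfalso
      have hmax : IsMaxOn (norm ∘ g) D z := by
        intro w hw
        simp only [Function.comp_apply, Set.mem_setOf_eq, h]
        exact hgle w hw
      have heq := Complex.eqOn_of_isPreconnected_of_isMaxOn_norm
        (convex_ball (0 : ℂ) 1).isPreconnected isOpen_ball hgd hz hmax
      have h0 : g 0 = g z := heq (by simp [hD])
      rw [hg0] at h0
      rw [← h0] at h
      simp at h
  -- Schwarz lemma: ‖g z‖ ≤ ‖z‖
  have hschwarz : ∀ z ∈ D, ‖g z‖ ≤ ‖z‖ := by
    intro z hz
    have hmaps : Set.MapsTo g D D := by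
      intro w hw
      simpa [hD, mem_ball_zero_iff] using hglt w hw
    have := Complex.norm_le_norm_of_mapsTo_ball hgd (hmaps.mono_right ball_subset_closedBall) hg0
      (by simpa [hD, mem_ball_zero_iff] using hz)
    simpa using this
  -- hence ‖φ z‖ ≤ 1 on D
  have hφle : ∀ z ∈ D, ‖φ z‖ ≤ 1 := by
    intro z hz
    rcases eq_or_ne z 0 with rfl | hz0
    · -- by continuity at 0
      have hc : ContinuousAt φ 0 := (hφa 0 hz).continuousAt
      have ht : Filter.Tendsto (fun w => ‖φ w‖) (nhdsWithin 0 {(0 : ℂ)}ᶜ) (nhds ‖φ 0‖) :=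
        (hc.norm.tendsto).mono_left nhdsWithin_le_nhds
      refine le_of_tendsto ht ?_
      have hball : D ∈ nhds (0 : ℂ) := isOpen_ball.mem_nhds hz
      filter_upwards [nhdsWithin_le_nhds hball, self_mem_nhdsWithin] with w hw hw0
      have := hschwarz w hw
      have hgw : ‖g w‖ = ‖w‖ * ‖φ w‖ := by simp [hgdef]
      rw [hgw] at this
      have hwpos : (0 : ℝ) < ‖w‖ := norm_pos_iff.mpr hw0
      nlinarith
    · have := hschwarz z hz
      have hgz : ‖g z‖ = ‖z‖ * ‖φ z‖ := by simp [hgdef]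
      rw [hgz] at this
      have hzpos : (0 : ℝ) < ‖z‖ := norm_pos_iff.mpr hz0
      nlinarith
  -- ‖φ ζ₀‖ = 1
  have hφζ : ‖φ ζ₀‖ = 1 := by
    have hdζ := hden ζ₀ hζ₀
    have hkey : ζ₀ + 2 * deriv f ζ₀ / deriv (deriv f) ζ₀
        = (2 * deriv f ζ₀ + ζ₀ * deriv (deriv f) ζ₀) / deriv (deriv f) ζ₀ := by
      field_simp; ring
    rw [hkey, norm_div] at hone
    have hnum : ‖deriv (deriv f) ζ₀‖ ≠ 0 := norm_ne_zero_iff.mpr hf''ζ₀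
    rw [div_eq_one_iff_eq hnum] at hone
    simp only [hφdef, norm_div, hone]
    exact div_self hnum
  -- maximum modulus principle: φ is constant
  have hmax : IsMaxOn (norm ∘ φ) D ζ₀ := by
    intro w hw
    simp only [Function.comp_apply, Set.mem_setOf_eq, hφζ]
    exact hφle w hw
  have heq := Complex.eqOn_of_isPreconnected_of_isMaxOn_norm
    (convex_ball (0 : ℂ) 1).isPreconnected isOpen_ball hφd hζ₀ hmax
  exact ⟨φ ζ₀, hφζ, fun z hz => heq hz⟩
end

section
/- Let g be analytic on the punctured unit disk with a simple pole at 0, g' never zero, and suppose Re{1 + z g''(z)/g'(z)} ≤ 0 for 0 < |z| < 1 (g concave). Define ω by z²ω(z)·g''(z) = 2g'(z) + z g''(z). Then ω extends analytically to D with |ω(z)| ≤ |z| for all z ∈ D; consequently, for every ζ with 0 < |ζ| < 1 and g''(ζ) ≠ 0, the pole p(ζ) = ζ + 2g'(ζ)/g''(ζ) of the BMA satisfies |p(ζ)| < 1. -/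
open Complex Metric

/-- If `Re w ≤ 0` then `w + 1` is no farther from `0` than `w - 1`. -/
private lemma halfplane_norm_le {w : ℂ} (hw : w.re ≤ 0) : ‖w + 1‖ ≤ ‖w - 1‖ := by
  have h1 : Complex.normSq (w + 1) ≤ Complex.normSq (w - 1) := by
    simp only [Complex.normSq_apply, Complex.add_re, Complex.add_im, Complex.sub_re,
      Complex.sub_im, Complex.one_re, Complex.one_im]
    nlinarith [hw]
  have h2 : ‖w + 1‖ ^ 2 ≤ ‖w - 1‖ ^ 2 := by
    rw [Complex.sq_norm, Complex.sq_norm]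
    exact h1
  nlinarith [norm_nonneg (w + 1), norm_nonneg (w - 1)]

/-- For a concave mapping `g` of the unit disk with a simple pole at `0`, the
function `ω` with `z²ω g'' = 2g' + z g''` extends analytically with
`|ω(z)| ≤ |z|`, and every BMA pole lies in the open unit disk. -/
theorem concave_poles_inside (g G : ℂ → ℂ)
    -- simple pole at 0 : g z = G z / z with G analytic, G 0 ≠ 0
    (hG : ∀ z ∈ ball (0 : ℂ) 1, AnalyticAt ℂ G z) (hG0 : G 0 ≠ 0)
    (hgG : ∀ z ∈ ball (0 : ℂ) 1, z ≠ 0 → g z = G z / z)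
    (hg' : ∀ z ∈ ball (0 : ℂ) 1, z ≠ 0 → deriv g z ≠ 0)
    (hconc : ∀ z ∈ ball (0 : ℂ) 1, z ≠ 0 →
      (1 + z * (deriv (deriv g) z / deriv g z)).re ≤ 0) :
    (∃ ω : ℂ → ℂ, (∀ z ∈ ball (0 : ℂ) 1, AnalyticAt ℂ ω z) ∧
        (∀ z ∈ ball (0 : ℂ) 1, ‖ω z‖ ≤ ‖z‖) ∧
        ∀ z ∈ ball (0 : ℂ) 1, z ≠ 0 →
          z ^ 2 * ω z * deriv (deriv g) z = 2 * deriv g z + z * deriv (deriv g) z) ∧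
      ∀ ζ ∈ ball (0 : ℂ) 1, ζ ≠ 0 → deriv (deriv g) ζ ≠ 0 →
        ‖ζ + 2 * deriv g ζ / deriv (deriv g) ζ‖ < 1 := by
  have hGan : AnalyticOnNhd ℂ G (ball 0 1) := hG
  have hG1 : AnalyticOnNhd ℂ (deriv G) (ball 0 1) := hGan.deriv
  have hG2 : AnalyticOnNhd ℂ (deriv (deriv G)) (ball 0 1) := hG1.deriv
  set D : ℂ → ℂ := fun z =>
    z ^ 2 * deriv (deriv G) z - 2 * z * deriv G z + 2 * G z with hD
  have hDan : ∀ z ∈ ball (0 : ℂ) 1, AnalyticAt ℂ D z := by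
    intro z hz
    exact (((analyticAt_id.pow 2).mul (hG2 z hz)).sub
      (((analyticAt_const.mul analyticAt_id)).mul (hG1 z hz))).add
      (analyticAt_const.mul (hGan z hz))
  have sopen : IsOpen (ball (0 : ℂ) 1 \ {0}) :=
    isOpen_ball.sdiff isClosed_singleton
  -- first derivative formula
  have key1 : ∀ z ∈ ball (0 : ℂ) 1, z ≠ 0 →
      deriv g z = (deriv G z * z - G z) / z ^ 2 := by
    intro z hz hz0
    have hmem : ball (0 : ℂ) 1 \ {0} ∈ nhds z := sopen.mem_nhds ⟨hz, hz0⟩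
    have hev : g =ᶠ[nhds z] fun w => G w / w := by
      filter_upwards [hmem] with w hw
      exact hgG w hw.1 hw.2
    rw [hev.deriv_eq]
    have h := ((hG z hz).differentiableAt.hasDerivAt.div (hasDerivAt_id' z) hz0)
    rw [show (fun w => G w / w) = (G / fun x => x) from rfl, h.deriv]
    ring_nf
  -- second derivative formula
  have key2 : ∀ z ∈ ball (0 : ℂ) 1, z ≠ 0 →
      deriv (deriv g) z = D z / z ^ 3 := by
    intro z hz hz0
    have hmem : ball (0 : ℂ) 1 \ {0} ∈ nhds z := sopen.mem_nhds ⟨hz, hz0⟩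
    have hev : deriv g =ᶠ[nhds z] fun w => (deriv G w * w - G w) / w ^ 2 := by
      filter_upwards [hmem] with w hw
      exact key1 w hw.1 hw.2
    rw [hev.deriv_eq]
    have hnum : HasDerivAt (fun w => deriv G w * w - G w)
        (deriv (deriv G) z * z + deriv G z * 1 - deriv G z) z :=
      ((hG1 z hz).differentiableAt.hasDerivAt.mul (hasDerivAt_id z)).sub
        (hG z hz).differentiableAt.hasDerivAt
    have hden : HasDerivAt (fun w : ℂ => w ^ 2) (2 * z ^ 1) z := by
      simpa using hasDerivAt_pow 2 z
    have hpow : (z : ℂ) ^ 2 ≠ 0 := pow_ne_zero 2 hz0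
    rw [show (fun w => (deriv G w * w - G w) / w ^ 2) = ((fun w => deriv G w * w - G w) / fun w => w ^ 2) from rfl,
      (hnum.div hden hpow).deriv, hD]
    field_simp
    ring
  -- g'' never vanishes on the punctured disk
  have hg'' : ∀ z ∈ ball (0 : ℂ) 1, z ≠ 0 → deriv (deriv g) z ≠ 0 := by
    intro z hz hz0 h0
    have := hconc z hz hz0
    rw [h0] at this
    simp at this
    linarith
  -- D never vanishes on the disk
  have hDne : ∀ z ∈ ball (0 : ℂ) 1, D z ≠ 0 := by
    intro z hz
    rcases eq_or_ne z 0 with rfl | hz0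
    · simpa [hD] using hG0
    · have h2 := key2 z hz hz0
      have hzD : D z = z ^ 3 * deriv (deriv g) z := by
        rw [h2]; field_simp
      rw [hzD]
      exact mul_ne_zero (pow_ne_zero 3 hz0) (hg'' z hz hz0)
  -- the function ω
  set ω : ℂ → ℂ := fun z => z * deriv (deriv G) z / D z with hω
  have hωan : ∀ z ∈ ball (0 : ℂ) 1, AnalyticAt ℂ ω z := fun z hz =>
    (analyticAt_id.mul (hG2 z hz)).div (hDan z hz) (hDne z hz)
  have hω0 : ω 0 = 0 := by simp [hω]
  -- the defining functional equation
  have heq : ∀ z ∈ ball (0 : ℂ) 1, z ≠ 0 →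
      z ^ 2 * ω z * deriv (deriv g) z = 2 * deriv g z + z * deriv (deriv g) z := by
    intro z hz hz0
    rw [key1 z hz hz0, key2 z hz hz0, hω, hD]
    have := hDne z hz
    rw [hD] at this
    beta_reduce at this
    field_simp
    have hE : (deriv (deriv G) z * z ^ 2 + G z * 2 - z * deriv G z * 2)⁻¹ *
        (deriv (deriv G) z * z ^ 2 + G z * 2 - z * deriv G z * 2) = 1 :=
      inv_mul_cancel₀ (by convert this using 1; ring)
    linear_combination (z ^ 2 * deriv (deriv G) z) * hE
  -- pointwise bound `‖z * ω z‖ ≤ 1` on the punctured disk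
  have hbnd1 : ∀ z ∈ ball (0 : ℂ) 1, z ≠ 0 → ‖z * ω z‖ ≤ 1 := by
    intro z hz hz0
    set h : ℂ := 1 + z * (deriv (deriv g) z / deriv g z) with hh
    have hg'z := hg' z hz hz0
    have hg''z := hg'' z hz hz0
    have e := heq z hz hz0
    have hsub : h - 1 = z * deriv (deriv g) z / deriv g z := by rw [hh]; ring
    have hsubne : h - 1 ≠ 0 := by
      rw [hsub]
      exact div_ne_zero (mul_ne_zero hz0 hg''z) hg'z
    have hplus : h + 1 = (2 * deriv g z + z * deriv (deriv g) z) / deriv g z := by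
      rw [hh]; field_simp; ring
    have hzω : z * ω z = (h + 1) / (h - 1) := by
      have h1 : (h + 1) / (h - 1)
          = (2 * deriv g z + z * deriv (deriv g) z) / (z * deriv (deriv g) z) := by
        rw [div_eq_div_iff hsubne (mul_ne_zero hz0 hg''z), hplus, hsub]
        field_simp
      rw [h1, eq_div_iff (mul_ne_zero hz0 hg''z)]
      linear_combination e
    rw [hzω, norm_div, div_le_one (norm_pos_iff.mpr hsubne)]
    have hre : h.re ≤ 0 := hconc z hz hz0
    exact halfplane_norm_le hre
  -- maximum modulus: `‖ω‖ ≤ 1/r` on closed balls of radius `r < 1`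
  have hmax : ∀ r : ℝ, 0 < r → r < 1 → ∀ w ∈ closedBall (0 : ℂ) r, ‖ω w‖ ≤ 1 / r := by
    intro r hr0 hr1 w hw
    have hsubB : closedBall (0 : ℂ) r ⊆ ball 0 1 := closedBall_subset_ball hr1
    have hd : DiffContOnCl ℂ ω (ball (0 : ℂ) r) := by
      apply DifferentiableOn.diffContOnCl
      rw [closure_ball (0 : ℂ) (ne_of_gt hr0)]
      exact fun x hx => ((hωan x (hsubB hx)).differentiableAt).differentiableWithinAt
    have hfront : ∀ x ∈ frontier (ball (0 : ℂ) r), ‖ω x‖ ≤ 1 / r := by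
      intro x hx
      rw [frontier_ball (0 : ℂ) (ne_of_gt hr0)] at hx
      have hxn : ‖x‖ = r := mem_sphere_zero_iff_norm.mp hx
      have hx0 : x ≠ 0 := by
        intro hxe
        rw [hxe, norm_zero] at hxn
        exact absurd hxn.symm (ne_of_gt hr0)
      have hxball : x ∈ ball (0 : ℂ) 1 := mem_ball_zero_iff.mpr (hxn ▸ hr1)
      have hb := hbnd1 x hxball hx0
      rw [norm_mul, hxn] at hb
      rw [le_div_iff₀ hr0]
      linarith [hb]
    have hcl : w ∈ closure (ball (0 : ℂ) r) := by
      rwa [closure_ball (0 : ℂ) (ne_of_gt hr0)]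
    exact norm_le_of_forall_mem_frontier_norm_le isBounded_ball hd hfront hcl
  -- Schwarz lemma: `‖ω z‖ ≤ ‖z‖`
  have hbnd : ∀ z ∈ ball (0 : ℂ) 1, ‖ω z‖ ≤ ‖z‖ := by
    intro z hzb
    have hz : ‖z‖ < 1 := mem_ball_zero_iff.mp hzb
    have key : ∀ r : ℝ, ‖z‖ < r → r < 1 → ‖ω z‖ ≤ 1 / r / r * ‖z‖ := by
      intro r hzr hr1
      have hr0 : 0 < r := lt_of_le_of_lt (norm_nonneg z) hzr
      have hd : DifferentiableOn ℂ ω (ball (0 : ℂ) r) := fun x hx =>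
        ((hωan x (ball_subset_ball hr1.le hx)).differentiableAt).differentiableWithinAt
      have hmaps : Set.MapsTo ω (ball (0 : ℂ) r) (ball (ω 0) (1 / r)) := by
        intro x hx
        rw [hω0, mem_ball_zero_iff]
        have hxr : ‖x‖ < r := mem_ball_zero_iff.mp hx
        have h1 : ‖ω x‖ ≤ 1 / ((r + 1) / 2) := by
          apply hmax ((r + 1) / 2) (by linarith) (by linarith)
          exact mem_closedBall_zero_iff.mpr (by linarith)
        calc ‖ω x‖ ≤ 1 / ((r + 1) / 2) := h1
          _ < 1 / r := by
            apply one_div_lt_one_div_of_lt hr0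
            linarith
      have hz' : z ∈ ball (0 : ℂ) r := mem_ball_zero_iff.mpr hzr
      have := Complex.dist_le_div_mul_dist_of_mapsTo_ball hd (hmaps.mono_right ball_subset_closedBall) hz'
      simpa [hω0, dist_eq_norm] using this
    have hlim : Filter.Tendsto (fun r : ℝ => 1 / r / r * ‖z‖)
        (nhdsWithin 1 (Set.Iio 1)) (nhds ‖z‖) := by
      have hc : ContinuousAt (fun r : ℝ => 1 / r / r * ‖z‖) 1 :=
        (((continuousAt_const.div continuousAt_id one_ne_zero).div
          continuousAt_id one_ne_zero).mul continuousAt_const)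
      have h2 : Filter.Tendsto (fun r : ℝ => 1 / r / r * ‖z‖) (nhds 1) (nhds ‖z‖) := by
        simpa using hc.tendsto
      exact h2.mono_left nhdsWithin_le_nhds
    refine ge_of_tendsto hlim ?_
    filter_upwards [Ioo_mem_nhdsLT_of_mem (Set.mem_Ioc.mpr ⟨hz, le_refl 1⟩)] with r hr
    exact key r hr.1 hr.2
  refine ⟨⟨ω, hωan, hbnd, heq⟩, ?_⟩
  intro ζ hζ hζ0 hg''ζ
  have e := heq ζ hζ hζ0
  have hp : ζ + 2 * deriv g ζ / deriv (deriv g) ζ = ζ ^ 2 * ω ζ := by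
    rw [eq_comm]
    field_simp
    linear_combination e
  rw [hp]
  have hb := hbnd ζ hζ
  have hζn : ‖ζ‖ < 1 := mem_ball_zero_iff.mp hζ
  have : ‖ζ ^ 2 * ω ζ‖ = ‖ζ‖ ^ 2 * ‖ω ζ‖ := by rw [norm_mul, norm_pow]
  rw [this]
  nlinarith [norm_nonneg ζ, norm_nonneg (ω ζ)]
end

section
/- Let f map the unit disk conformally onto a convex n-gon with prevertices the roots on the unit circle of zB(z) = 1, where B is a Blaschke product of degree n−1, and 1 + z f''/f' = (1+zB)/(1−zB). Let φ(t) = f(e^{it}) for e^{it} in an open arc I_k between consecutive prevertices. Then u(t) = |f'(e^{it})|^{−1/2} satisfies u'' + (1/2)Re{Sφ(t)} u = 0 with Re{Sφ(t)} > 0 on I_k; hence u is strictly concave and |f'(e^{it})| is convex on I_k. -/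
open Complex Metric ComplexConjugate

/-- The Schwarzian derivative of a curve `φ : ℝ → ℂ`. -/
noncomputable def curveSchwarzian (φ : ℝ → ℂ) (t : ℝ) : ℂ :=
  deriv (fun s => deriv (deriv φ) s / deriv φ s) t -
    (1 / 2) * (deriv (deriv φ) t / deriv φ t) ^ 2

private lemma analyticAt_deriv'' {f : ℂ → ℂ} {x : ℂ} (h : AnalyticAt ℂ f x) :
    AnalyticAt ℂ (deriv f) x := by
  have h2 : AnalyticOnNhd ℂ f {y | AnalyticAt ℂ f y} := fun y hy => hy
  exact h2.deriv x h

private lemma circle_im_re {w : ℂ} (hw : ‖w‖ = 1) :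
    (I * (1 + w) / (1 - w)).im = 0 ∧ (w / (1 - w) ^ 2).re ≤ 0 := by
  have hxy : w.re * w.re + w.im * w.im = 1 := by
    have h : Complex.normSq w = 1 := by
      rw [Complex.normSq_eq_norm_sq, hw]; norm_num
    simpa [Complex.normSq_apply] using h
  constructor
  · rw [Complex.div_im, div_sub_div_same,
      show (I * (1 + w)).im * (1 - w).re - (I * (1 + w)).re * (1 - w).im = 0 from by
        simp [Complex.mul_im, Complex.mul_re]; nlinarith [hxy],
      zero_div]
  · rw [Complex.div_re, ← add_div]
    apply div_nonpos_of_nonpos_of_nonneg _ (Complex.normSq_nonneg _)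
    have h1 : ((1 - w) ^ 2).re = (1 - w.re) * (1 - w.re) - w.im * w.im := by
      simp [pow_two, Complex.mul_re]
    have h2 : ((1 - w) ^ 2).im = (1 - w.re) * (-w.im) + (-w.im) * (1 - w.re) := by
      simp [pow_two, Complex.mul_im]
    rw [h1, h2]
    nlinarith [hxy, sq_nonneg (w.re - 1), sq_nonneg w.im, sq_nonneg (w.re + 1)]

private lemma master {B f : ℂ → ℂ}
    (hB : ∀ z : ℂ, ‖z‖ = 1 → ∃ σ : ℝ, 0 ≤ σ ∧ ‖B z‖ = 1 ∧ HasDerivAt B (B z * σ / z) z)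
    {t₁ t₂ : ℝ}
    (harc : ∀ t ∈ Set.Ioo t₁ t₂, AnalyticAt ℂ f (exp (t * I)) ∧
      deriv f (exp (t * I)) ≠ 0 ∧ exp (t * I) * B (exp (t * I)) ≠ 1 ∧
      1 + exp (t * I) * (deriv (deriv f) (exp (t * I)) / deriv f (exp (t * I))) =
        (1 + exp (t * I) * B (exp (t * I))) / (1 - exp (t * I) * B (exp (t * I))))
    (φ : ℝ → ℂ) (hφ : ∀ t, φ t = f (exp (t * I)))
    (u : ℝ → ℝ) (hu : ∀ t, u t = ‖deriv f (exp (t * I))‖ ^ (-(1 / 2) : ℝ))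
    (N : ℝ → ℝ) (hN : ∀ t, N t = ‖deriv f (exp (t * I))‖)
    {t : ℝ} (htS : t ∈ Set.Ioo t₁ t₂) :
    1 / 2 ≤ (curveSchwarzian φ t).re ∧
    deriv (deriv u) t = -(1 / 2) * (curveSchwarzian φ t).re * u t ∧
    0 < u t ∧ DifferentiableAt ℝ u t ∧
    DifferentiableAt ℝ N t ∧ DifferentiableAt ℝ (deriv N) t ∧ 0 ≤ deriv (deriv N) t := by
  have hSopen : IsOpen (Set.Ioo t₁ t₂) := isOpen_Ioo
  have hmem : Set.Ioo t₁ t₂ ∈ nhds t := hSopen.mem_nhds htS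
  have hZn : ∀ s : ℝ, ‖exp ((s : ℂ) * I)‖ = 1 := fun s => by
    rw [Complex.norm_exp_ofReal_mul_I]
  have hZ0 : ∀ s : ℝ, exp ((s : ℂ) * I) ≠ 0 := fun s => Complex.exp_ne_zero _
  have hZd : ∀ s : ℝ, HasDerivAt (fun x : ℝ => exp ((x : ℂ) * I)) (exp ((s : ℂ) * I) * I) s := by
    intro s
    have h1 : HasDerivAt (fun v : ℂ => exp (v * I)) (exp (((s : ℝ) : ℂ) * I) * I) ((s : ℝ) : ℂ) := by
      simpa using ((hasDerivAt_id ((s : ℝ) : ℂ)).mul_const I).cexp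
    exact h1.comp_ofReal
  have hφe : φ = fun s : ℝ => f (exp ((s : ℂ) * I)) := funext hφ
  subst hφe
  have hue : u = fun s : ℝ => ‖deriv f (exp ((s : ℂ) * I))‖ ^ (-(1 / 2) : ℝ) := funext hu
  subst hue
  have hNe : N = fun s : ℝ => ‖deriv f (exp ((s : ℂ) * I))‖ := funext hN
  subst hNe
  obtain ⟨hfa, hF0, hw1, heq⟩ := harc t htS
  -- first derivative of φ
  have hφd : ∀ s ∈ Set.Ioo t₁ t₂, HasDerivAt (fun x : ℝ => f (exp ((x : ℂ) * I)))
      (deriv f (exp ((s : ℂ) * I)) * (exp ((s : ℂ) * I) * I)) s := by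
    intro s hs
    simpa [Function.comp_def] using ((harc s hs).1.differentiableAt.hasDerivAt).comp s (hZd s)
  -- derivative of F = f' ∘ exp
  have hFd : ∀ s ∈ Set.Ioo t₁ t₂, HasDerivAt (fun x : ℝ => deriv f (exp ((x : ℂ) * I)))
      (deriv (deriv f) (exp ((s : ℂ) * I)) * (exp ((s : ℂ) * I) * I)) s := by
    intro s hs
    simpa [Function.comp_def] using
      ((analyticAt_deriv'' (harc s hs).1).differentiableAt.hasDerivAt).comp s (hZd s)
  have hφ1 : Set.EqOn (deriv (fun x : ℝ => f (exp ((x : ℂ) * I))))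
      (fun s : ℝ => deriv f (exp ((s : ℂ) * I)) * (exp ((s : ℂ) * I) * I)) (Set.Ioo t₁ t₂) :=
    fun s hs => (hφd s hs).deriv
  have hφ2 : ∀ s ∈ Set.Ioo t₁ t₂, HasDerivAt (deriv (fun x : ℝ => f (exp ((x : ℂ) * I))))
      (deriv (deriv f) (exp ((s : ℂ) * I)) * (exp ((s : ℂ) * I) * I) * (exp ((s : ℂ) * I) * I)
        + deriv f (exp ((s : ℂ) * I)) * (exp ((s : ℂ) * I) * I * I)) s := by
    intro s hs
    have hmul := (hFd s hs).mul ((hZd s).mul_const I)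
    exact hmul.congr_of_eventuallyEq
      (Filter.eventuallyEq_of_mem (hSopen.mem_nhds hs) hφ1)
  -- logarithmic derivative of φ' equals the boundary formula
  have hgG : Set.EqOn (fun s => deriv (deriv (fun x : ℝ => f (exp ((x : ℂ) * I)))) s
        / deriv (fun x : ℝ => f (exp ((x : ℂ) * I))) s)
      (fun s : ℝ => I * (1 + exp ((s : ℂ) * I) * B (exp ((s : ℂ) * I)))
        / (1 - exp ((s : ℂ) * I) * B (exp ((s : ℂ) * I)))) (Set.Ioo t₁ t₂) := by
    intro s hs
    obtain ⟨_, hF0s, hw1s, heqs⟩ := harc s hs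
    have e1 := (hφ2 s hs).deriv
    have e2 := hφ1 hs
    simp only []
    rw [e1, e2]
    have h3 : (deriv (deriv f) (exp ((s : ℂ) * I)) * (exp ((s : ℂ) * I) * I) * (exp ((s : ℂ) * I) * I)
          + deriv f (exp ((s : ℂ) * I)) * (exp ((s : ℂ) * I) * I * I))
        / (deriv f (exp ((s : ℂ) * I)) * (exp ((s : ℂ) * I) * I))
        = I * (1 + exp ((s : ℂ) * I) * (deriv (deriv f) (exp ((s : ℂ) * I)) / deriv f (exp ((s : ℂ) * I)))) := by
      field_simp
      ring
    rw [h3, heqs]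
    ring
  -- point data at t
  obtain ⟨σ, hσ0, hBn, hBd⟩ := hB (exp ((t : ℂ) * I)) (hZn t)
  have hz0' : exp ((t : ℂ) * I) ≠ 0 := hZ0 t
  have hWn : ‖exp ((t : ℂ) * I) * B (exp ((t : ℂ) * I))‖ = 1 := by
    rw [norm_mul, hZn t, hBn, one_mul]
  have hden0 : (1 : ℂ) - exp ((t : ℂ) * I) * B (exp ((t : ℂ) * I)) ≠ 0 :=
    sub_ne_zero.2 (Ne.symm hw1)
  have hBz : HasDerivAt (fun s : ℝ => B (exp ((s : ℂ) * I)))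
      (B (exp ((t : ℂ) * I)) * σ / exp ((t : ℂ) * I) * (exp ((t : ℂ) * I) * I)) t := by
    simpa [Function.comp_def] using hBd.comp t (hZd t)
  have hWd := (hZd t).mul hBz
  have hWd' : HasDerivAt (fun s : ℝ => exp ((s : ℂ) * I) * B (exp ((s : ℂ) * I)))
      (I * (exp ((t : ℂ) * I) * B (exp ((t : ℂ) * I))) * (1 + σ)) t := by
    refine hWd.congr_deriv ?_
    symm
    field_simp
  have hGd : HasDerivAt (fun s : ℝ => I * (1 + exp ((s : ℂ) * I) * B (exp ((s : ℂ) * I)))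
        / (1 - exp ((s : ℂ) * I) * B (exp ((s : ℂ) * I))))
      (-2 * (exp ((t : ℂ) * I) * B (exp ((t : ℂ) * I))) * (1 + σ)
        / (1 - exp ((t : ℂ) * I) * B (exp ((t : ℂ) * I))) ^ 2) t := by
    have hnum : HasDerivAt (fun s : ℝ => I * (1 + exp ((s : ℂ) * I) * B (exp ((s : ℂ) * I))))
        (I * (I * (exp ((t : ℂ) * I) * B (exp ((t : ℂ) * I))) * (1 + σ))) t :=
      (hWd'.const_add 1).const_mul I
    have hden : HasDerivAt (fun s : ℝ => 1 - exp ((s : ℂ) * I) * B (exp ((s : ℂ) * I)))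
        (-(I * (exp ((t : ℂ) * I) * B (exp ((t : ℂ) * I))) * (1 + σ))) t :=
      hWd'.const_sub 1
    have h0 := hnum.div hden hden0
    refine h0.congr_deriv ?_
    symm
    set W := exp ((t : ℂ) * I) * B (exp ((t : ℂ) * I)) with hWdef
    linear_combination (-(W * (1 + (σ : ℂ)) * (1 - W) + (1 + W) * (W * (1 + (σ : ℂ))))
      / (1 - W) ^ 2) * Complex.I_mul_I
  have hevg : (fun s => deriv (deriv (fun x : ℝ => f (exp ((x : ℂ) * I)))) s
        / deriv (fun x : ℝ => f (exp ((x : ℂ) * I))) s)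
      =ᶠ[nhds t] (fun s : ℝ => I * (1 + exp ((s : ℂ) * I) * B (exp ((s : ℂ) * I)))
        / (1 - exp ((s : ℂ) * I) * B (exp ((s : ℂ) * I)))) :=
    Filter.eventuallyEq_of_mem hmem hgG
  have hgt : deriv (deriv (fun x : ℝ => f (exp ((x : ℂ) * I)))) t
      / deriv (fun x : ℝ => f (exp ((x : ℂ) * I))) t
      = I * (1 + exp ((t : ℂ) * I) * B (exp ((t : ℂ) * I)))
        / (1 - exp ((t : ℂ) * I) * B (exp ((t : ℂ) * I))) := by
    simpa using hgG htS
  have hSch : curveSchwarzian (fun s : ℝ => f (exp ((s : ℂ) * I))) t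
      = -2 * (exp ((t : ℂ) * I) * B (exp ((t : ℂ) * I))) * (1 + σ)
          / (1 - exp ((t : ℂ) * I) * B (exp ((t : ℂ) * I))) ^ 2
        - 1 / 2 * (I * (1 + exp ((t : ℂ) * I) * B (exp ((t : ℂ) * I)))
          / (1 - exp ((t : ℂ) * I) * B (exp ((t : ℂ) * I)))) ^ 2 := by
    unfold curveSchwarzian
    rw [hevg.deriv_eq, hGd.deriv, hgt]
  obtain ⟨hGim, hvre⟩ := circle_im_re hWn
  have hSre : (curveSchwarzian (fun s : ℝ => f (exp ((s : ℂ) * I))) t).re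
      = 1 / 2 - 2 * σ * ((exp ((t : ℂ) * I) * B (exp ((t : ℂ) * I))
          / (1 - exp ((t : ℂ) * I) * B (exp ((t : ℂ) * I))) ^ 2).re) := by
    rw [hSch]
    set W := exp ((t : ℂ) * I) * B (exp ((t : ℂ) * I)) with hWdef
    have hsq : (I * (1 + W) / (1 - W)) ^ 2 = -((1 + W) ^ 2 / (1 - W) ^ 2) := by
      rw [div_pow, mul_pow, Complex.I_sq]; ring
    have hid : -2 * W * (1 + (σ : ℂ)) / (1 - W) ^ 2 - 1 / 2 * (I * (1 + W) / (1 - W)) ^ 2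
        = ((1 / 2 : ℝ) : ℂ) - ((2 * σ : ℝ) : ℂ) * (W / (1 - W) ^ 2) := by
      push_cast
      rw [hsq]
      field_simp
      ring
    rw [hid, Complex.sub_re, Complex.ofReal_re, Complex.re_ofReal_mul]
  have c1 : 1 / 2 ≤ (curveSchwarzian (fun s : ℝ => f (exp ((s : ℂ) * I))) t).re := by
    rw [hSre]
    nlinarith [hσ0, hvre]
  -- derivative of Re G at t
  have hRd : HasDerivAt (fun s : ℝ => (I * (1 + exp ((s : ℂ) * I) * B (exp ((s : ℂ) * I)))
        / (1 - exp ((s : ℂ) * I) * B (exp ((s : ℂ) * I)))).re)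
      ((-2 * (exp ((t : ℂ) * I) * B (exp ((t : ℂ) * I))) * (1 + σ)
        / (1 - exp ((t : ℂ) * I) * B (exp ((t : ℂ) * I))) ^ 2).re) t := by
    simpa [Function.comp_def] using (Complex.reCLM.hasFDerivAt.comp_hasDerivAt t hGd)
  -- derivative of M = normSq (f' ∘ exp)
  have hMd : ∀ s ∈ Set.Ioo t₁ t₂,
      HasDerivAt (fun x : ℝ => Complex.normSq (deriv f (exp ((x : ℂ) * I))))
      (2 * (I * (1 + exp ((s : ℂ) * I) * B (exp ((s : ℂ) * I)))
          / (1 - exp ((s : ℂ) * I) * B (exp ((s : ℂ) * I)))).re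
        * Complex.normSq (deriv f (exp ((s : ℂ) * I)))) s := by
    intro s hs
    obtain ⟨_, hF0s, hw1s, heqs⟩ := harc s hs
    have hF := hFd s hs
    have hconj : HasDerivAt (fun x : ℝ => conj (deriv f (exp ((x : ℂ) * I))))
        (conj (deriv (deriv f) (exp ((s : ℂ) * I)) * (exp ((s : ℂ) * I) * I))) s := by
      simpa [Function.comp_def] using (Complex.conjCLE.toContinuousLinearMap.hasFDerivAt.comp_hasDerivAt s hF)
    have hmul := hF.mul hconj
    have hre : HasDerivAt (fun x : ℝ => ((deriv f (exp ((x : ℂ) * I)))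
          * conj (deriv f (exp ((x : ℂ) * I)))).re)
        ((deriv (deriv f) (exp ((s : ℂ) * I)) * (exp ((s : ℂ) * I) * I)
            * conj (deriv f (exp ((s : ℂ) * I)))
          + deriv f (exp ((s : ℂ) * I))
            * conj (deriv (deriv f) (exp ((s : ℂ) * I)) * (exp ((s : ℂ) * I) * I))).re) s := by
      simpa only [Function.comp_def, Complex.reCLM_apply, Pi.mul_apply] using
        (Complex.reCLM.hasFDerivAt.comp_hasDerivAt s hmul)
    have hfun : (fun x : ℝ => ((deriv f (exp ((x : ℂ) * I)))
          * conj (deriv f (exp ((x : ℂ) * I)))).re)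
        = fun x : ℝ => Complex.normSq (deriv f (exp ((x : ℂ) * I))) := by
      funext x
      rw [Complex.mul_conj, Complex.ofReal_re]
    rw [hfun] at hre
    convert hre using 1
    have hGsub : I * (1 + exp ((s : ℂ) * I) * B (exp ((s : ℂ) * I)))
          / (1 - exp ((s : ℂ) * I) * B (exp ((s : ℂ) * I))) - I
        = I * (exp ((s : ℂ) * I) * (deriv (deriv f) (exp ((s : ℂ) * I)) / deriv f (exp ((s : ℂ) * I)))) := by
      rw [mul_div_assoc, ← heqs]
      ring
    have hFF : deriv (deriv f) (exp ((s : ℂ) * I)) * (exp ((s : ℂ) * I) * I)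
        = (I * (1 + exp ((s : ℂ) * I) * B (exp ((s : ℂ) * I)))
            / (1 - exp ((s : ℂ) * I) * B (exp ((s : ℂ) * I))) - I) * deriv f (exp ((s : ℂ) * I)) := by
      rw [hGsub]
      field_simp [hF0s]
    rw [hFF, map_mul]
    set G := I * (1 + exp ((s : ℂ) * I) * B (exp ((s : ℂ) * I)))
        / (1 - exp ((s : ℂ) * I) * B (exp ((s : ℂ) * I))) with hGdef
    have h8 : (G - I) * deriv f (exp ((s : ℂ) * I)) * conj (deriv f (exp ((s : ℂ) * I)))
          + deriv f (exp ((s : ℂ) * I)) * (conj (G - I) * conj (deriv f (exp ((s : ℂ) * I))))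
        = ((G - I) + conj (G - I)) * (deriv f (exp ((s : ℂ) * I)) * conj (deriv f (exp ((s : ℂ) * I)))) := by
      ring
    rw [h8, Complex.add_conj, Complex.mul_conj, ← Complex.ofReal_mul, Complex.ofReal_re,
      Complex.sub_re, Complex.I_re]
    ring
  -- rewrite u and N through M
  have hueq : (fun s : ℝ => ‖deriv f (exp ((s : ℂ) * I))‖ ^ (-(1 / 2) : ℝ))
      = fun s : ℝ => Complex.normSq (deriv f (exp ((s : ℂ) * I))) ^ (-(1 / 4) : ℝ) := by
    funext s
    rw [Complex.norm_def, Real.sqrt_eq_rpow,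
      ← Real.rpow_mul (Complex.normSq_nonneg _)]
    norm_num
  have hNeq : (fun s : ℝ => ‖deriv f (exp ((s : ℂ) * I))‖)
      = fun s : ℝ => Complex.normSq (deriv f (exp ((s : ℂ) * I))) ^ ((1 / 2) : ℝ) := by
    funext s
    rw [Complex.norm_def, Real.sqrt_eq_rpow]
  rw [hueq, hNeq]
  have hMpos : ∀ s ∈ Set.Ioo t₁ t₂, 0 < Complex.normSq (deriv f (exp ((s : ℂ) * I))) :=
    fun s hs => Complex.normSq_pos.2 (harc s hs).2.1
  have hud : ∀ s ∈ Set.Ioo t₁ t₂,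
      HasDerivAt (fun x : ℝ => Complex.normSq (deriv f (exp ((x : ℂ) * I))) ^ (-(1 / 4) : ℝ))
      (-(1 / 2) * ((I * (1 + exp ((s : ℂ) * I) * B (exp ((s : ℂ) * I)))
          / (1 - exp ((s : ℂ) * I) * B (exp ((s : ℂ) * I)))).re
        * Complex.normSq (deriv f (exp ((s : ℂ) * I))) ^ (-(1 / 4) : ℝ))) s := by
    intro s hs
    have h0 := (hMd s hs).rpow_const (p := (-(1 / 4) : ℝ)) (Or.inl (ne_of_gt (hMpos s hs)))
    convert h0 using 1
    have hM1 : Complex.normSq (deriv f (exp ((s : ℂ) * I))) ^ ((-(1 / 4) : ℝ) - 1)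
          * Complex.normSq (deriv f (exp ((s : ℂ) * I)))
        = Complex.normSq (deriv f (exp ((s : ℂ) * I))) ^ (-(1 / 4) : ℝ) := by
      rw [← Real.rpow_add_one (ne_of_gt (hMpos s hs))]
      norm_num
    rw [← hM1]
    ring
  have hNd : ∀ s ∈ Set.Ioo t₁ t₂,
      HasDerivAt (fun x : ℝ => Complex.normSq (deriv f (exp ((x : ℂ) * I))) ^ ((1 / 2) : ℝ))
      ((I * (1 + exp ((s : ℂ) * I) * B (exp ((s : ℂ) * I)))
          / (1 - exp ((s : ℂ) * I) * B (exp ((s : ℂ) * I)))).re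
        * Complex.normSq (deriv f (exp ((s : ℂ) * I))) ^ ((1 / 2) : ℝ)) s := by
    intro s hs
    have h0 := (hMd s hs).rpow_const (p := ((1 / 2) : ℝ)) (Or.inl (ne_of_gt (hMpos s hs)))
    convert h0 using 1
    have hM1 : Complex.normSq (deriv f (exp ((s : ℂ) * I))) ^ (((1 / 2) : ℝ) - 1)
          * Complex.normSq (deriv f (exp ((s : ℂ) * I)))
        = Complex.normSq (deriv f (exp ((s : ℂ) * I))) ^ ((1 / 2) : ℝ) := by
      rw [← Real.rpow_add_one (ne_of_gt (hMpos s hs))]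
      norm_num
    rw [← hM1]
    ring
  have hduev : deriv (fun x : ℝ => Complex.normSq (deriv f (exp ((x : ℂ) * I))) ^ (-(1 / 4) : ℝ))
      =ᶠ[nhds t] (fun s : ℝ => -(1 / 2) * ((I * (1 + exp ((s : ℂ) * I) * B (exp ((s : ℂ) * I)))
          / (1 - exp ((s : ℂ) * I) * B (exp ((s : ℂ) * I)))).re
        * Complex.normSq (deriv f (exp ((s : ℂ) * I))) ^ (-(1 / 4) : ℝ))) :=
    Filter.eventuallyEq_of_mem hmem (fun s hs => (hud s hs).deriv)
  have hdd := (hRd.mul (hud t htS)).const_mul (-(1 / 2) : ℝ)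
  have hdNev : deriv (fun x : ℝ => Complex.normSq (deriv f (exp ((x : ℂ) * I))) ^ ((1 / 2) : ℝ))
      =ᶠ[nhds t] (fun s : ℝ => (I * (1 + exp ((s : ℂ) * I) * B (exp ((s : ℂ) * I)))
          / (1 - exp ((s : ℂ) * I) * B (exp ((s : ℂ) * I)))).re
        * Complex.normSq (deriv f (exp ((s : ℂ) * I))) ^ ((1 / 2) : ℝ)) :=
    Filter.eventuallyEq_of_mem hmem (fun s hs => (hNd s hs).deriv)
  have hdd2 := hRd.mul (hNd t htS)
  have hSre2 : (curveSchwarzian (fun s : ℝ => f (exp ((s : ℂ) * I))) t).re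
      = (-2 * (exp ((t : ℂ) * I) * B (exp ((t : ℂ) * I))) * (1 + σ)
          / (1 - exp ((t : ℂ) * I) * B (exp ((t : ℂ) * I))) ^ 2).re
        - 1 / 2 * ((I * (1 + exp ((t : ℂ) * I) * B (exp ((t : ℂ) * I)))
          / (1 - exp ((t : ℂ) * I) * B (exp ((t : ℂ) * I)))).re) ^ 2 := by
    rw [hSch, Complex.sub_re]
    congr 1
    rw [show ((1 : ℂ) / 2) * (I * (1 + exp ((t : ℂ) * I) * B (exp ((t : ℂ) * I)))
          / (1 - exp ((t : ℂ) * I) * B (exp ((t : ℂ) * I)))) ^ 2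
        = (((1 / 2 : ℝ)) : ℂ) * (I * (1 + exp ((t : ℂ) * I) * B (exp ((t : ℂ) * I)))
          / (1 - exp ((t : ℂ) * I) * B (exp ((t : ℂ) * I)))) ^ 2 from by norm_num,
      Complex.re_ofReal_mul, pow_two, Complex.mul_re, hGim]
    ring
  refine ⟨c1, ?_, ?_, ?_, ?_, ?_, ?_⟩
  · rw [hduev.deriv_eq]; erw [hdd.deriv, hSre2]
    ring
  · exact Real.rpow_pos_of_pos (hMpos t htS) _
  · exact (hud t htS).differentiableAt
  · exact (hNd t htS).differentiableAt
  · exact (hdd2.congr_of_eventuallyEq hdNev).differentiableAt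
  · rw [hdNev.deriv_eq]; erw [hdd2.deriv]
    have hc1' := c1
    rw [hSre2] at hc1'
    nlinarith [hc1', Real.rpow_nonneg
        (Complex.normSq_nonneg (deriv f (exp ((t : ℂ) * I)))) ((1 / 2) : ℝ),
      sq_nonneg ((I * (1 + exp ((t : ℂ) * I) * B (exp ((t : ℂ) * I)))
          / (1 - exp ((t : ℂ) * I) * B (exp ((t : ℂ) * I)))).re)]

private lemma blaschke_facts {n : ℕ} (c : ℂ) (hc : ‖c‖ = 1) (a : Fin (n - 1) → ℂ)
    (ha : ∀ j, ‖a j‖ < 1) (B : ℂ → ℂ)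
    (hB : ∀ z, B z = c * ∏ j, (z - a j) / (1 - (starRingEnd ℂ) (a j) * z)) :
    ∀ z : ℂ, ‖z‖ = 1 → ∃ σ : ℝ, 0 ≤ σ ∧ ‖B z‖ = 1 ∧ HasDerivAt B (B z * σ / z) z := by
  have hBe : B = fun z => c * ∏ j, (z - a j) / (1 - (starRingEnd ℂ) (a j) * z) := funext hB
  subst hBe
  intro z hz
  have hz0 : z ≠ 0 := by
    intro h; rw [h] at hz; simp at hz
  have hzc : z * conj z = 1 := by
    rw [Complex.mul_conj]
    rw [show Complex.normSq z = 1 by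
      rw [Complex.normSq_eq_norm_sq, hz]; norm_num]
    norm_num
  have hza : ∀ j, z - a j ≠ 0 := by
    intro j h
    have h2 : z = a j := sub_eq_zero.1 h
    rw [h2] at hz
    exact absurd hz (ne_of_lt (ha j))
  have hcza : ∀ j, conj (z - a j) ≠ 0 := fun j h =>
    hza j (by simpa using congrArg (starRingEnd ℂ) h)
  have hfact : ∀ j, 1 - conj (a j) * z = z * conj (z - a j) := by
    intro j; rw [map_sub]; linear_combination -hzc
  have hden : ∀ j, 1 - conj (a j) * z ≠ 0 := fun j => by
    rw [hfact j]; exact mul_ne_zero hz0 (hcza j)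
  have hnsa : ∀ j, Complex.normSq (a j) < 1 := by
    intro j
    rw [Complex.normSq_eq_norm_sq]
    nlinarith [ha j, norm_nonneg (a j)]
  set ρ : Fin (n - 1) → ℝ := fun j => (1 - Complex.normSq (a j)) / Complex.normSq (z - a j)
    with hρ
  have hρ0 : ∀ j, 0 ≤ ρ j := fun j =>
    div_nonneg (by linarith [hnsa j]) (Complex.normSq_nonneg _)
  have hd : ∀ j, HasDerivAt (fun v => (v - a j) / (1 - conj (a j) * v))
      ((1 - (Complex.normSq (a j) : ℂ)) / (1 - conj (a j) * z) ^ 2) z := by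
    intro j
    have h1 : HasDerivAt (fun v : ℂ => v - a j) 1 z := (hasDerivAt_id z).sub_const _
    have h2 : HasDerivAt (fun v : ℂ => 1 - conj (a j) * v) (-(conj (a j) * 1)) z :=
      ((hasDerivAt_id z).const_mul _).const_sub 1
    have h3 := h1.div h2 (hden j)
    refine h3.congr_deriv ?_
    symm
    congr 1
    linear_combination Complex.mul_conj (a j)
  have hkey : ∀ j, z * ((1 - (Complex.normSq (a j) : ℂ)) / (1 - conj (a j) * z) ^ 2)
      = ((z - a j) / (1 - conj (a j) * z)) * ((ρ j : ℝ) : ℂ) := by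
    intro j
    rw [hρ]
    rw [hfact j]
    push_cast
    rw [← Complex.mul_conj (z - a j)]
    have hq : conj z - conj (a j) ≠ 0 := by rw [← map_sub]; exact hcza j
    field_simp [hz0, hza j, hcza j, hq]
  have hfn : ∀ j, ‖(z - a j) / (1 - conj (a j) * z)‖ = 1 := by
    intro j
    rw [norm_div, hfact j, norm_mul, hz, one_mul, RCLike.norm_conj,
      div_self (norm_ne_zero_iff.2 (hza j))]
  have hBn : ‖c * ∏ j, (z - a j) / (1 - conj (a j) * z)‖ = 1 := by
    rw [norm_mul, hc, one_mul, norm_prod]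
    rw [Finset.prod_congr rfl (fun j _ => hfn j)]
    simp
  refine ⟨∑ j, ρ j, Finset.sum_nonneg (fun j _ => hρ0 j), hBn, ?_⟩
  have hP : HasDerivAt (fun v => ∏ j, (v - a j) / (1 - conj (a j) * v))
      (∑ i, (∏ j ∈ Finset.univ.erase i, ((z - a j) / (1 - conj (a j) * z))) •
        ((1 - (Complex.normSq (a i) : ℂ)) / (1 - conj (a i) * z) ^ 2)) z := by
    exact HasDerivAt.fun_finsetProd (fun i _ => hd i)
  have hBd := hP.const_mul c
  have hval : (c * ∏ j, (z - a j) / (1 - conj (a j) * z)) * ((∑ j, ρ j : ℝ) : ℂ) / z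
      = c * ∑ i, (∏ j ∈ Finset.univ.erase i, ((z - a j) / (1 - conj (a j) * z))) •
        ((1 - (Complex.normSq (a i) : ℂ)) / (1 - conj (a i) * z) ^ 2) := by
    rw [div_eq_iff hz0]
    have hcast : ((∑ j, ρ j : ℝ) : ℂ) = ∑ j, ((ρ j : ℝ) : ℂ) := by push_cast; rfl
    rw [hcast]
    simp only [smul_eq_mul]
    rw [Finset.mul_sum, Finset.mul_sum, Finset.sum_mul]
    refine Finset.sum_congr rfl (fun i _ => ?_)
    calc (c * ∏ j, (z - a j) / (1 - conj (a j) * z)) * ((ρ i : ℝ) : ℂ)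
        = c * ((∏ j ∈ Finset.univ.erase i, ((z - a j) / (1 - conj (a j) * z)))
            * (((z - a i) / (1 - conj (a i) * z)) * ((ρ i : ℝ) : ℂ))) := by
          rw [← Finset.prod_erase_mul _ _ (Finset.mem_univ i)]
          ring
      _ = c * ((∏ j ∈ Finset.univ.erase i, ((z - a j) / (1 - conj (a j) * z)))
            * (z * ((1 - (Complex.normSq (a i) : ℂ)) / (1 - conj (a i) * z) ^ 2))) := by
          rw [← hkey i]
      _ = c * ((∏ j ∈ Finset.univ.erase i, ((z - a j) / (1 - conj (a j) * z)))
            * ((1 - (Complex.normSq (a i) : ℂ)) / (1 - conj (a i) * z) ^ 2)) * z := by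
          ring
  rw [show (fun z => c * ∏ j, (z - a j) / (1 - (starRingEnd ℂ) (a j) * z)) z
      = c * ∏ j, (z - a j) / (1 - conj (a j) * z) from rfl, hval]
  exact hBd


/-- For a convex polygonal mapping `f`, on each prevertex-free boundary arc
`u(t) = |f'(e^{it})|^{−1/2}` satisfies `u'' + (1/2)Re{Sφ}u = 0` with
`Re{Sφ} > 0`; hence `u` is strictly concave and `|f'(e^{it})|` is convex. -/
theorem boundary_derivative_convexity (n : ℕ) (hn : 2 ≤ n)
    (c : ℂ) (hc : ‖c‖ = 1) (a : Fin (n - 1) → ℂ) (ha : ∀ j, ‖a j‖ < 1)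
    (B : ℂ → ℂ)
    (hB : ∀ z, B z = c * ∏ j, (z - a j) / (1 - (starRingEnd ℂ) (a j) * z))
    (f : ℂ → ℂ)
    -- the Blaschke representation of convexity on the disk
    (hrep : ∀ z ∈ ball (0 : ℂ) 1, z ≠ 0 → deriv f z ≠ 0 ∧
      1 + z * (deriv (deriv f) z / deriv f z) = (1 + z * B z) / (1 - z * B z))
    (t₁ t₂ : ℝ) (ht : t₁ < t₂)
    -- `f` extends analytically across the open arc `I_k`, free of prevertices,
    -- and the representation persists there
    (harc : ∀ t ∈ Set.Ioo t₁ t₂, AnalyticAt ℂ f (exp (t * I)) ∧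
      deriv f (exp (t * I)) ≠ 0 ∧ exp (t * I) * B (exp (t * I)) ≠ 1 ∧
      1 + exp (t * I) * (deriv (deriv f) (exp (t * I)) / deriv f (exp (t * I))) =
        (1 + exp (t * I) * B (exp (t * I))) / (1 - exp (t * I) * B (exp (t * I))))
    (φ : ℝ → ℂ) (hφ : ∀ t, φ t = f (exp (t * I)))
    (u : ℝ → ℝ) (hu : ∀ t, u t = ‖deriv f (exp (t * I))‖ ^ (-(1 / 2) : ℝ)) :
    (∀ t ∈ Set.Ioo t₁ t₂,
        deriv (deriv u) t + (1 / 2) * (curveSchwarzian φ t).re * u t = 0 ∧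
        0 < (curveSchwarzian φ t).re) ∧
      StrictConcaveOn ℝ (Set.Ioo t₁ t₂) u ∧
      ConvexOn ℝ (Set.Ioo t₁ t₂) (fun t => ‖deriv f (exp (t * I))‖) := by
  have hBfact := blaschke_facts c hc a ha B hB
  have key : ∀ t ∈ Set.Ioo t₁ t₂,
      1 / 2 ≤ (curveSchwarzian φ t).re ∧
      deriv (deriv u) t = -(1 / 2) * (curveSchwarzian φ t).re * u t ∧
      0 < u t ∧ DifferentiableAt ℝ u t ∧
      DifferentiableAt ℝ (fun s : ℝ => ‖deriv f (exp (s * I))‖) t ∧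
      DifferentiableAt ℝ (deriv (fun s : ℝ => ‖deriv f (exp (s * I))‖)) t ∧
      0 ≤ deriv (deriv (fun s : ℝ => ‖deriv f (exp (s * I))‖)) t :=
    fun t ht => master hBfact harc φ hφ u hu
      (fun s : ℝ => ‖deriv f (exp (s * I))‖) (fun _ => rfl) ht
  have hiter : ∀ (g : ℝ → ℝ), deriv^[2] g = deriv (deriv g) := fun g => rfl
  refine ⟨fun t ht => ⟨?_, ?_⟩, ?_, ?_⟩
  · rw [(key t ht).2.1]
    ring
  · linarith [(key t ht).1]
  · apply strictConcaveOn_of_deriv2_neg (convex_Ioo t₁ t₂)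
    · exact fun x hx => ((key x hx).2.2.2.1).continuousAt.continuousWithinAt
    · intro x hx
      rw [interior_Ioo] at hx
      rw [hiter u, (key x hx).2.1]
      nlinarith [(key x hx).1, (key x hx).2.2.1]
  · apply convexOn_of_deriv2_nonneg (convex_Ioo t₁ t₂)
    · exact fun x hx => ((key x hx).2.2.2.2.1).continuousAt.continuousWithinAt
    · intro x hx
      rw [interior_Ioo] at hx
      exact ((key x hx).2.2.2.2.1).differentiableWithinAt
    · intro x hx
      rw [interior_Ioo] at hx
      exact ((key x hx).2.2.2.2.2.1).differentiableWithinAt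
    · intro x hx
      rw [interior_Ioo] at hx
      rw [hiter]
      exact (key x hx).2.2.2.2.2.2
end
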